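/- Let V be a vertex ring with canonical Hasse-Schmidt derivation D_m(u) = u(-m-1)𝟙. Then for all u ∈ V, i ≥ 0, and n ∈ ℤ, the mode identity (D_i u)(n) = (-1)^i * C(n, i) * u(n - i) holds as endomorphisms of V. -/
import Mathlib


noncomputable section

/-- Binomial coefficient `C(m, n)` for integer `m` and natural `n`:
`C(m,n) = m(m-1)⋯(m-n+1)/n!`. -/
def ibin (m : ℤ) (n : ℕ) : ℤ :=
  if 0 ≤ m then ((m.toNat.choose n : ℕ) : ℤ)
  else (-1) ^ n * ((((n : ℤ) - m - 1).toNat.choose n : ℕ) : ℤ)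

/-- Binomial coefficient `C(m, n)` for integers `m, n`, zero when `n < 0`. -/
def ibinZ (m n : ℤ) : ℤ := if 0 ≤ n then ibin m n.toNat else 0

/-- A vertex ring structure on an additive abelian group `V`: biadditive
products `mul n u v = u(n)v` for all `n : ℤ`, a vacuum element `one = 𝟙`,
satisfying truncation, the vacuum axioms, and the Jacobi identity. -/
structure VertexRing (V : Type*) [AddCommGroup V] where
  mul : ℤ → V → V → V
  one : V
  add_left : ∀ (n : ℤ) (u u' v : V), mul n (u + u') v = mul n u v + mul n u' v
  add_right : ∀ (n : ℤ) (u v v' : V), mul n u (v + v') = mul n u v + mul n u v'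
  trunc : ∀ u v : V, ∃ n₀ : ℤ, 0 ≤ n₀ ∧ ∀ n : ℤ, n₀ ≤ n → mul n u v = 0
  vac_create : ∀ u : V, mul (-1) u one = u
  vac_ann : ∀ (u : V) (n : ℤ), 0 ≤ n → mul n u one = 0
  jacobi : ∀ (r s t : ℤ) (u v w : V),
      (∑ᶠ i : ℕ, ibin r i • mul (r + s - (i : ℤ)) (mul (t + (i : ℤ)) u v) w) =
      (∑ᶠ i : ℕ, ((-1) ^ i * ibin t i) •
        (mul (r + t - (i : ℤ)) u (mul (s + (i : ℤ)) v w)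
          - (((-1 : ℤˣ) ^ t : ℤˣ) : ℤ) • mul (s + t - (i : ℤ)) v (mul (r + (i : ℤ)) u w)))

/-- The canonical Hasse–Schmidt derivation of a vertex ring: `D m u = u(-m-1)𝟙`. -/
def VertexRing.D {V : Type*} [AddCommGroup V] (R : VertexRing V) (m : ℕ) (u : V) : V :=
  R.mul (-(m : ℤ) - 1) u R.one

/-- The center of a vertex ring: states whose vertex operator is the constant
`u(-1)`, i.e. `u(n) = 0` for all `n ≠ -1`. -/
def VertexRing.center {V : Type*} [AddCommGroup V] (R : VertexRing V) : Set V :=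
  {u | ∀ n : ℤ, n ≠ -1 → ∀ v : V, R.mul n u v = 0}

/-! ### Auxiliary lemmas -/

section Aux

lemma ibin_zero_right (m : ℤ) : ibin m 0 = 1 := by
  unfold ibin; split <;> simp

lemma ibin_zero_left {j : ℕ} (hj : j ≠ 0) : ibin 0 j = 0 := by
  unfold ibin
  simp [Nat.choose_eq_zero_of_lt (Nat.pos_of_ne_zero hj)]

lemma ibin_neg_one (j : ℕ) : ibin (-1) j = (-1) ^ j := by
  unfold ibin
  rw [if_neg (by norm_num)]
  have : ((j : ℤ) - (-1) - 1).toNat = j := by omega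
  simp [this]

lemma ibin_neg_nat (i j : ℕ) : ibin (-(i:ℤ)-1) j = (-1) ^ j * ((j+i).choose j : ℤ) := by
  unfold ibin
  rw [if_neg (by omega)]
  have : ((j : ℤ) - (-(i:ℤ)-1) - 1).toNat = j + i := by omega
  rw [this]

lemma ibin_of_nonneg {n : ℤ} (hn : 0 ≤ n) (i : ℕ) : ibin n i = (n.toNat.choose i : ℤ) := by
  unfold ibin; rw [if_pos hn]

lemma ibin_of_neg {n : ℤ} (hn : n < 0) (i : ℕ) :
    ibin n i = (-1) ^ i * ((((i : ℤ) - n - 1).toNat.choose i : ℕ) : ℤ) := by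
  unfold ibin; rw [if_neg (by omega)]

lemma units_neg_one_zpow_neg_one : (((-1 : ℤˣ) ^ (-1 : ℤ) : ℤˣ) : ℤ) = -1 := by decide

lemma units_inv_neg_one : ((-1 : ℤˣ))⁻¹ = -1 := by decide

lemma units_neg_one_zpow (i : ℕ) :
    (((-1 : ℤˣ) ^ (-(i:ℤ) - 1) : ℤˣ) : ℤ) = (-1) ^ (i + 1) := by
  have h : (-(i:ℤ) - 1) = -((i+1 : ℕ) : ℤ) := by push_cast; ring
  rw [h, zpow_neg, zpow_natCast, ← inv_pow, units_inv_neg_one]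
  push_cast
  norm_num

lemma coeffA (i : ℕ) (n : ℤ) (hn : n ≤ -1) :
    (-1:ℤ)^((-1-n).toNat) * ibin (-(i:ℤ)-1) ((-1-n).toNat) = (-1)^i * ibin n i := by
  set j : ℕ := (-1-n).toNat with hj
  have hjz : (j : ℤ) = -1 - n := by omega
  rw [ibin_neg_nat, ibin_of_neg (by omega)]
  have h1 : ((i:ℤ) - n - 1).toNat = i + j := by omega
  rw [h1, ← mul_assoc, ← mul_pow]
  ring_nf
  rw [Nat.choose_symm_add]
  have h2 : ((-1:ℤ)^i)^2 = 1 := by rw [← pow_mul, pow_mul', neg_one_sq, one_pow]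
  rw [pow_mul, h2, mul_one]

lemma coeffB (i : ℕ) (n : ℤ) (h : (i:ℤ) ≤ n) :
    -(((-1:ℤ)^((n-i).toNat) * ibin (-(i:ℤ)-1) ((n-i).toNat)) * (-1)^(i+1))
      = (-1)^i * ibin n i := by
  set j : ℕ := (n-i).toNat with hj
  have hjz : (j : ℤ) = n - i := by omega
  rw [ibin_neg_nat, ibin_of_nonneg (by omega)]
  have h1 : n.toNat = j + i := by omega
  rw [h1, Nat.choose_symm_add, ← mul_assoc, ← mul_pow]
  have : ((-1:ℤ) * -1) ^ j = 1 := by norm_num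
  rw [this, one_mul, pow_succ]
  ring

end Aux

namespace VertexRing

variable {V : Type*} [AddCommGroup V] (R : VertexRing V)

lemma mul_zero_left (n : ℤ) (v : V) : R.mul n 0 v = 0 := by
  have h := R.add_left n 0 0 v
  rw [add_zero] at h
  exact (left_eq_add.mp h)

lemma mul_zero_right (n : ℤ) (u : V) : R.mul n u 0 = 0 := by
  have h := R.add_right n u 0 0
  rw [add_zero] at h
  exact (left_eq_add.mp h)

/-- Jacobi identity specialized at `t = -1`, `v = 𝟙`. -/
lemma star (r s : ℤ) (u w : V) :
    R.mul (r+s) u w = ∑ᶠ j : ℕ,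
      (R.mul (r-1-(j:ℤ)) u (R.mul (s+(j:ℤ)) R.one w)
        + R.mul (s-1-(j:ℤ)) R.one (R.mul (r+(j:ℤ)) u w)) := by
  have J := R.jacobi r s (-1) u R.one w
  have hL : (∑ᶠ j : ℕ, ibin r j • R.mul (r + s - (j:ℤ)) (R.mul (-1 + (j:ℤ)) u R.one) w)
      = R.mul (r+s) u w := by
    rw [finsum_eq_single _ 0]
    · norm_num [ibin_zero_right, R.vac_create]
    · intro j hj
      have h1 : (0:ℤ) ≤ -1 + (j:ℤ) := by
        have : 1 ≤ j := Nat.one_le_iff_ne_zero.mpr hj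
        omega
      rw [R.vac_ann u _ h1, R.mul_zero_left, smul_zero]
  rw [hL] at J
  rw [J]
  apply finsum_congr
  intro j
  have e1 : (-1:ℤ)^j * ibin (-1) j = 1 := by
    rw [ibin_neg_one, ← mul_pow]; norm_num
  rw [e1, one_smul, units_neg_one_zpow_neg_one, neg_one_smul, sub_neg_eq_add]
  have m1 : r + -1 - (j:ℤ) = r - 1 - j := by ring
  have m2 : s + -1 - (j:ℤ) = s - 1 - j := by ring
  rw [m1, m2]

/-- Modes of `𝟙` commute with all modes. -/
lemma comm_one (m r : ℤ) (u w : V) :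
    R.mul m R.one (R.mul r u w) = R.mul r u (R.mul m R.one w) := by
  obtain ⟨N₁, hN₁n, hN₁⟩ := R.trunc R.one w
  obtain ⟨N₂, hN₂n, hN₂⟩ := R.trunc u w
  set f : ℕ → V := fun j => R.mul (r - j) u (R.mul (m + j) R.one w) with hfdef
  set g : ℕ → V := fun j => R.mul (m - j) R.one (R.mul (r + j) u w) with hgdef
  set M : ℕ := (N₁ - m).toNat ⊔ (N₂ - r).toNat with hM
  have hf : ∀ j : ℕ, M ≤ j → f j = 0 := by
    intro j hjM
    have : N₁ ≤ m + j := by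
      have h1 : N₁ - m ≤ ((N₁ - m).toNat : ℤ) := Int.self_le_toNat _
      have h2 : ((N₁ - m).toNat : ℤ) ≤ (M : ℤ) := by exact_mod_cast Nat.le_max_left _ _
      have h3 : (M : ℤ) ≤ (j : ℤ) := by exact_mod_cast hjM
      omega
    show R.mul (r - j) u (R.mul (m + j) R.one w) = 0
    rw [hN₁ _ this, R.mul_zero_right]
  have hg : ∀ j : ℕ, M ≤ j → g j = 0 := by
    intro j hjM
    have : N₂ ≤ r + j := by
      have h1 : N₂ - r ≤ ((N₂ - r).toNat : ℤ) := Int.self_le_toNat _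
      have h2 : ((N₂ - r).toNat : ℤ) ≤ (M : ℤ) := by exact_mod_cast Nat.le_max_right _ _
      have h3 : (M : ℤ) ≤ (j : ℤ) := by exact_mod_cast hjM
      omega
    show R.mul (m - j) R.one (R.mul (r + j) u w) = 0
    rw [hN₂ _ this, R.mul_zero_right]
  have h1 := R.star r (m+1) u w
  have h2 := R.star (r+1) m u w
  have e1 : (fun j : ℕ => R.mul (r-1-(j:ℤ)) u (R.mul ((m+1)+(j:ℤ)) R.one w)
        + R.mul ((m+1)-1-(j:ℤ)) R.one (R.mul (r+(j:ℤ)) u w))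
      = fun j : ℕ => f (j+1) + g j := by
    funext j
    show _ = R.mul (r - ((j+1 : ℕ):ℤ)) u (R.mul (m + ((j+1:ℕ):ℤ)) R.one w) + _
    have a1 : r - ((j+1 : ℕ):ℤ) = r - 1 - j := by push_cast; ring
    have a2 : m + ((j+1 : ℕ):ℤ) = (m+1) + j := by push_cast; ring
    have a3 : (m+1)-1-(j:ℤ) = m - j := by ring
    rw [a1, a2, a3]
  have e2 : (fun j : ℕ => R.mul ((r+1)-1-(j:ℤ)) u (R.mul (m+(j:ℤ)) R.one w)
        + R.mul (m-1-(j:ℤ)) R.one (R.mul ((r+1)+(j:ℤ)) u w))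
      = fun j : ℕ => f j + g (j+1) := by
    funext j
    show _ = R.mul (r - (j:ℤ)) u _ + R.mul (m - ((j+1:ℕ):ℤ)) R.one (R.mul (r + ((j+1:ℕ):ℤ)) u w)
    have a1 : (r+1)-1-(j:ℤ) = r - j := by ring
    have a2 : m-1-(j:ℤ) = m - ((j+1:ℕ):ℤ) := by push_cast; ring
    have a3 : (r+1)+(j:ℤ) = r + ((j+1:ℕ):ℤ) := by push_cast; ring
    rw [a1, a2, a3]
  rw [e1] at h1
  rw [e2] at h2
  have hsum1 : (∑ᶠ j : ℕ, (f (j+1) + g j))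
      = ∑ j ∈ Finset.range (M+1), (f (j+1) + g j) := by
    apply finsum_eq_sum_of_support_subset
    intro j hj
    simp only [Function.mem_support, ne_eq] at hj
    by_contra hc
    simp only [Finset.coe_range, Set.mem_Iio] at hc
    push_neg at hc
    exact hj (by rw [hf (j+1) (by omega), hg j (by omega), add_zero])
  have hsum2 : (∑ᶠ j : ℕ, (f j + g (j+1)))
      = ∑ j ∈ Finset.range (M+1), (f j + g (j+1)) := by
    apply finsum_eq_sum_of_support_subset
    intro j hj
    simp only [Function.mem_support, ne_eq] at hj
    by_contra hc
    simp only [Finset.coe_range, Set.mem_Iio] at hc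
    push_neg at hc
    exact hj (by rw [hf j (by omega), hg (j+1) (by omega), add_zero])
  have hshift : ∀ (F : ℕ → V), F (M+1) = 0 →
      ∑ j ∈ Finset.range (M+1), F (j+1) = (∑ j ∈ Finset.range (M+1), F j) - F 0 := by
    intro F h0
    have h3 := Finset.sum_range_succ' F (M+1)
    rw [Finset.sum_range_succ F (M+1), h0, add_zero] at h3
    exact eq_sub_of_add_eq h3.symm
  have hlhs : r + (m+1) = (r+1) + m := by ring
  rw [hlhs, h2, hsum2] at h1
  rw [hsum1] at h1
  rw [Finset.sum_add_distrib, Finset.sum_add_distrib,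
    hshift f (hf _ (by omega)), hshift g (hg _ (by omega))] at h1
  -- h1 : (∑ f - f 0) + ∑ g = ∑ f + (∑ g - g 0)
  have key : g 0 = f 0 := by
    rw [← add_sub_assoc, sub_add_eq_add_sub] at h1
    exact sub_right_inj.mp h1
  have b1 : g 0 = R.mul m R.one (R.mul r u w) := by
    show R.mul (m - (0:ℕ)) R.one (R.mul (r + (0:ℕ)) u w) = _
    norm_num
  have b2 : f 0 = R.mul r u (R.mul m R.one w) := by
    show R.mul (r - (0:ℕ)) u (R.mul (m + (0:ℕ)) R.one w) = _
    norm_num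
  rw [← b1, ← b2, key]

end VertexRing

namespace VertexRing

variable {V : Type*} [AddCommGroup V] (R : VertexRing V)

lemma one_left_eq (m : ℤ) (u : V) :
    R.mul m R.one u = R.mul (-1) u (R.mul m R.one R.one) := by
  have h := R.comm_one m (-1) u R.one
  rwa [R.vac_create] at h

lemma one_nonneg {m : ℤ} (hm : 0 ≤ m) (u : V) : R.mul m R.one u = 0 := by
  rw [R.one_left_eq, R.vac_ann R.one m hm, R.mul_zero_right]

lemma one_neg_one (u : V) : R.mul (-1) R.one u = u := by
  rw [R.one_left_eq, R.vac_create, R.vac_create]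

lemma one_deep (k : ℕ) : ∀ u : V, R.mul (-2 - (k:ℤ)) R.one u = 0 := by
  induction k using Nat.strong_induction_on with
  | _ k IH =>
  intro u
  have h := R.star (-2-(k:ℤ)) 0 u R.one
  set T : ℕ → V := fun j => R.mul (-1-(j:ℤ)) R.one (R.mul (-2-(k:ℤ)+(j:ℤ)) u R.one) with hT
  have e1 : (fun j : ℕ => R.mul ((-2-(k:ℤ))-1-(j:ℤ)) u (R.mul (0+(j:ℤ)) R.one R.one)
        + R.mul (0-1-(j:ℤ)) R.one (R.mul ((-2-(k:ℤ))+(j:ℤ)) u R.one))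
      = T := by
    funext j
    show _ = R.mul (-1-(j:ℤ)) R.one (R.mul (-2-(k:ℤ)+(j:ℤ)) u R.one)
    rw [R.vac_ann R.one (0+(j:ℤ)) (by omega), R.mul_zero_right, zero_add]
    norm_num
  rw [e1] at h
  have hsupp : (∑ᶠ j : ℕ, T j) = ∑ j ∈ ({0, k+1} : Finset ℕ), T j := by
    apply finsum_eq_sum_of_support_subset
    intro j hj
    simp only [Function.mem_support, ne_eq] at hj
    simp only [Finset.coe_insert, Finset.coe_singleton, Set.mem_insert_iff,
      Set.mem_singleton_iff]
    by_contra hc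
    push_neg at hc
    obtain ⟨hc0, hck⟩ := hc
    apply hj
    rcases le_or_gt (k+2) j with hbig | hsmall
    · show R.mul (-1-(j:ℤ)) R.one (R.mul (-2-(k:ℤ)+(j:ℤ)) u R.one) = 0
      rw [R.vac_ann u _ (by omega), R.mul_zero_right]
    · -- 1 ≤ j ≤ k, use IH at j - 1
      have hj1 : 1 ≤ j := Nat.one_le_iff_ne_zero.mpr hc0
      have hjk : j ≤ k := by omega
      have := IH (j-1) (by omega) (R.mul (-2-(k:ℤ)+(j:ℤ)) u R.one)
      show R.mul (-1-(j:ℤ)) R.one (R.mul (-2-(k:ℤ)+(j:ℤ)) u R.one) = 0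
      have hmode : -1-(j:ℤ) = -2 - ((j-1 : ℕ):ℤ) := by
        have : ((j-1:ℕ):ℤ) = (j:ℤ) - 1 := by omega
        rw [this]; ring
      rw [hmode]
      exact this
  rw [hsupp, Finset.sum_pair (by omega : (0:ℕ) ≠ k+1)] at h
  have hT0 : T 0 = R.mul (-2-(k:ℤ)+0) u R.one := by
    show R.mul (-1-((0:ℕ):ℤ)) R.one _ = _
    rw [Nat.cast_zero]
    have : -1 - (0:ℤ) = -1 := by ring
    rw [this, R.one_neg_one]
  have hTk : T (k+1) = R.mul (-2-(k:ℤ)) R.one u := by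
    show R.mul (-1-((k+1:ℕ):ℤ)) R.one (R.mul (-2-(k:ℤ)+((k+1:ℕ):ℤ)) u R.one) = _
    have a1 : -1-((k+1:ℕ):ℤ) = -2-(k:ℤ) := by push_cast; ring
    have a2 : -2-(k:ℤ)+((k+1:ℕ):ℤ) = -1 := by push_cast; ring
    rw [a1, a2, R.vac_create]
  rw [hT0, hTk] at h
  exact left_eq_add.mp h

lemma one_left {m : ℤ} (hm : m ≠ -1) (x : V) : R.mul m R.one x = 0 := by
  rcases le_or_gt 0 m with h | h
  · exact R.one_nonneg h x
  · have hm2 : m ≤ -2 := by omega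
    have : m = -2 - ((-2-m).toNat : ℤ) := by omega
    rw [this]
    exact R.one_deep _ x

end VertexRing

/-- Mode identity for the canonical HS derivation:
`(D_i u)(n) = (-1)^i C(n,i) u(n-i)`. -/
theorem mode_of_D {V : Type*} [AddCommGroup V] (R : VertexRing V)
    (u : V) (i : ℕ) (n : ℤ) (v : V) :
    R.mul n (R.D i u) v = ((-1) ^ i * ibin n i) • R.mul (n - (i : ℤ)) u v := by
  have J := R.jacobi 0 n (-(i:ℤ)-1) u R.one v
  have hL : (∑ᶠ j : ℕ, ibin 0 j • R.mul (0 + n - (j:ℤ)) (R.mul ((-(i:ℤ)-1) + (j:ℤ)) u R.one) v)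
      = R.mul n (R.D i u) v := by
    rw [finsum_eq_single _ 0]
    · rw [ibin_zero_right, one_smul]
      norm_num [VertexRing.D]
    · intro j hj
      rw [ibin_zero_left hj, zero_smul]
  rw [hL] at J
  rw [J]
  rcases le_or_gt 0 n with hn | hn
  · rcases le_or_gt (i:ℤ) n with hni | hni
    · -- case i ≤ n : single term at j₁ = (n-i).toNat
      set j₁ : ℕ := (n - (i:ℤ)).toNat with hj₁
      have hj₁z : (j₁ : ℤ) = n - i := by omega
      rw [finsum_eq_single _ j₁]
      · rw [R.one_left (by omega : n + (j₁:ℤ) ≠ -1), R.mul_zero_right]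
        have a1 : n + (-(i:ℤ)-1) - (j₁:ℤ) = -1 := by omega
        rw [a1, R.one_neg_one]
        have a2 : 0 + (j₁:ℤ) = n - i := by omega
        rw [a2, units_neg_one_zpow, zero_sub, smul_neg, smul_smul, ← neg_smul,
          coeffB i n hni]
      · intro j hj
        have hA : R.mul (n + (j:ℤ)) R.one v = 0 := R.one_left (by omega) v
        have hB : R.mul (n + (-(i:ℤ)-1) - (j:ℤ)) R.one (R.mul (0 + (j:ℤ)) u v) = 0 := by
          apply R.one_left
          have : (j:ℤ) ≠ n - i := by
            intro hc
            exact hj (by omega)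
          omega
        rw [hA, R.mul_zero_right, hB, smul_zero, sub_zero, smul_zero]
    · -- case 0 ≤ n < i : everything vanishes
      rw [finsum_eq_zero_of_forall_eq_zero]
      · have : ibin n i = 0 := by
          rw [ibin_of_nonneg hn]
          rw [Nat.choose_eq_zero_of_lt (by omega)]
          norm_num
        rw [this, mul_zero, zero_smul]
      · intro j
        have hA : R.mul (n + (j:ℤ)) R.one v = 0 := R.one_left (by omega) v
        have hB : R.mul (n + (-(i:ℤ)-1) - (j:ℤ)) R.one (R.mul (0 + (j:ℤ)) u v) = 0 :=
          R.one_left (by omega) _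
        rw [hA, R.mul_zero_right, hB, smul_zero, sub_zero, smul_zero]
  · -- case n < 0 : single term at j₀ = (-1-n).toNat
    set j₀ : ℕ := (-1 - n).toNat with hj₀
    have hj₀z : (j₀ : ℤ) = -1 - n := by omega
    rw [finsum_eq_single _ j₀]
    · have hB : R.mul (n + (-(i:ℤ)-1) - (j₀:ℤ)) R.one (R.mul (0 + (j₀:ℤ)) u v) = 0 :=
        R.one_left (by omega) _
      rw [hB, smul_zero, sub_zero]
      have a1 : n + (j₀:ℤ) = -1 := by omega
      rw [a1, R.one_neg_one]
      have a2 : 0 + (-(i:ℤ)-1) - (j₀:ℤ) = n - i := by omega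
      rw [a2, coeffA i n (by omega)]
    · intro j hj
      have hA : R.mul (n + (j:ℤ)) R.one v = 0 := by
        apply R.one_left
        have : (j:ℤ) ≠ -1 - n := by
          intro hc
          exact hj (by omega)
        omega
      have hB : R.mul (n + (-(i:ℤ)-1) - (j:ℤ)) R.one (R.mul (0 + (j:ℤ)) u v) = 0 :=
        R.one_left (by omega) _
      rw [hA, R.mul_zero_right, hB, smul_zero, sub_zero, smul_zero]
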